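/- Let H ≤ 𝔽₂ⁿ be a subgroup, η > 0, and f : 𝔽₂ⁿ → ℝ with ‖f‖_A ≤ M. Then there is a subgroup H' ≤ H with codim(H : H') ≤ M/η such that for every r ∉ (H')^⊥, ∑_{r' ∈ r + (H')^⊥} |f̂(r')| ≤ η. -/
import Mathlib


open scoped Classical
open Finset

noncomputable def ft {n : ℕ} (f : (Fin n → ZMod 2) → ℝ) (r : Fin n → ZMod 2) : ℝ :=
  (∑ x : Fin n → ZMod 2, f x * (-1 : ℝ) ^ (∑ i, r i * x i).val) /
    (Fintype.card (Fin n → ZMod 2))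

noncomputable def aNorm {n : ℕ} (f : (Fin n → ZMod 2) → ℝ) : ℝ := ∑ r : Fin n → ZMod 2, |ft f r|

def ann {n : ℕ} (H : Submodule (ZMod 2) (Fin n → ZMod 2)) : Set (Fin n → ZMod 2) :=
  {r | ∀ x ∈ H, ∑ i, r i * x i = 0}

namespace SpecProofAux

variable {n : ℕ}

noncomputable def lmap (r : Fin n → ZMod 2) : (Fin n → ZMod 2) →ₗ[ZMod 2] ZMod 2 where
  toFun x := ∑ i, r i * x i
  map_add' x y := by simp [mul_add, Finset.sum_add_distrib]
  map_smul' c x := by simp [Finset.mul_sum, smul_eq_mul, mul_left_comm]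

noncomputable def mass (f : (Fin n → ZMod 2) → ℝ)
    (S : Submodule (ZMod 2) (Fin n → ZMod 2)) : ℝ :=
  ∑ r ∈ Finset.univ.filter (fun r => r ∈ ann S), |ft f r|

lemma sub_mem_ann {H' : Submodule (ZMod 2) (Fin n → ZMod 2)} {a b : Fin n → ZMod 2}
    (ha : a ∈ ann H') (hb : b ∈ ann H') : a - b ∈ ann H' := by
  intro x hx
  have h1 := ha x hx
  have h2 := hb x hx
  have h3 : ∑ i, (a - b) i * x i = (∑ i, a i * x i) - ∑ i, b i * x i := by
    simp [sub_mul, Finset.sum_sub_distrib]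
  rw [h3, h1, h2, sub_zero]

lemma ann_anti {H₁ H₂ : Submodule (ZMod 2) (Fin n → ZMod 2)} (h : H₁ ≤ H₂) :
    ann H₂ ⊆ ann H₁ := fun r hr x hx => hr x (h hx)

lemma coset_mem_ann {H' : Submodule (ZMod 2) (Fin n → ZMod 2)} {r s : Fin n → ZMod 2}
    (hs : s - r ∈ ann H') {x : Fin n → ZMod 2}
    (hx : x ∈ (H' ⊓ LinearMap.ker (lmap r) : Submodule (ZMod 2) (Fin n → ZMod 2))) :
    ∑ i, s i * x i = 0 := by
  have h1 : ∑ i, (s - r) i * x i = 0 := hs x hx.1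
  have h2 : ∑ i, r i * x i = 0 := hx.2
  have h3 : ∑ i, s i * x i = (∑ i, (s - r) i * x i) + ∑ i, r i * x i := by
    simp [sub_mul, Finset.sum_sub_distrib]
  rw [h3, h1, h2, add_zero]

lemma finrank_step (H' : Submodule (ZMod 2) (Fin n → ZMod 2)) (r : Fin n → ZMod 2) :
    Module.finrank (ZMod 2) H' ≤
      Module.finrank (ZMod 2)
        (H' ⊓ LinearMap.ker (lmap r) : Submodule (ZMod 2) (Fin n → ZMod 2)) + 1 := by
  have h1 := LinearMap.finrank_range_add_finrank_ker ((lmap r).comp H'.subtype)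
  have h2 : Module.finrank (ZMod 2) (LinearMap.range ((lmap r).comp H'.subtype)) ≤ 1 := by
    have := Submodule.finrank_le (LinearMap.range ((lmap r).comp H'.subtype))
    simpa using this
  have h3 : LinearMap.ker ((lmap r).comp H'.subtype) =
      Submodule.comap H'.subtype (LinearMap.ker (lmap r)) := by rw [LinearMap.ker_comp]
  have h4 : Module.finrank (ZMod 2) (Submodule.comap H'.subtype (LinearMap.ker (lmap r))) =
      Module.finrank (ZMod 2)
        (H' ⊓ LinearMap.ker (lmap r) : Submodule (ZMod 2) (Fin n → ZMod 2)) := by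
    rw [← Submodule.map_comap_subtype]
    exact (LinearEquiv.finrank_eq
      (Submodule.equivMapOfInjective H'.subtype (Submodule.injective_subtype H') _))
  rw [h3, h4] at h1
  omega

lemma mass_nonneg (f : (Fin n → ZMod 2) → ℝ) (S : Submodule (ZMod 2) (Fin n → ZMod 2)) :
    0 ≤ mass f S :=
  Finset.sum_nonneg fun _ _ => abs_nonneg _

lemma mass_le_aNorm (f : (Fin n → ZMod 2) → ℝ) (S : Submodule (ZMod 2) (Fin n → ZMod 2)) :
    mass f S ≤ aNorm f :=
  Finset.sum_le_sum_of_subset_of_nonneg (Finset.filter_subset _ _)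
    (fun _ _ _ => abs_nonneg _)

lemma mass_step (f : (Fin n → ZMod 2) → ℝ) (H' : Submodule (ZMod 2) (Fin n → ZMod 2))
    {r : Fin n → ZMod 2} (hr : r ∉ ann H') :
    mass f H' + (∑ r' ∈ Finset.univ.filter (fun r' => r' - r ∈ ann H'), |ft f r'|) ≤
      mass f (H' ⊓ LinearMap.ker (lmap r)) := by
  set A := Finset.univ.filter (fun r' => r' ∈ ann H') with hA
  set B := Finset.univ.filter (fun r' => r' - r ∈ ann H') with hB
  have hdisj : Disjoint A B := by
    rw [Finset.disjoint_left]
    intro s hsA hsB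
    simp only [hA, hB, Finset.mem_filter, Finset.mem_univ, true_and] at hsA hsB
    exact hr (by simpa using sub_mem_ann hsA hsB)
  have hsub : A ∪ B ⊆ Finset.univ.filter
      (fun r' => r' ∈ ann (H' ⊓ LinearMap.ker (lmap r) : Submodule (ZMod 2) (Fin n → ZMod 2))) := by
    intro s hs
    simp only [hA, hB, Finset.mem_union, Finset.mem_filter, Finset.mem_univ, true_and] at hs ⊢
    rcases hs with hs | hs
    · exact fun x hx => hs x hx.1
    · exact fun x hx => coset_mem_ann hs hx
  calc mass f H' + ∑ r' ∈ B, |ft f r'| = ∑ r' ∈ A ∪ B, |ft f r'| := by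
        rw [Finset.sum_union hdisj]; rfl
    _ ≤ mass f (H' ⊓ LinearMap.ker (lmap r)) :=
        Finset.sum_le_sum_of_subset_of_nonneg hsub (fun _ _ _ => abs_nonneg _)

end SpecProofAux

theorem spectral_support_subgroup {n : ℕ} (H : Submodule (ZMod 2) (Fin n → ZMod 2))
    (η M : ℝ) (hη : 0 < η) (f : (Fin n → ZMod 2) → ℝ) (hf : aNorm f ≤ M) :
    ∃ H' : Submodule (ZMod 2) (Fin n → ZMod 2), H' ≤ H ∧
      ((Module.finrank (ZMod 2) H : ℝ) - Module.finrank (ZMod 2) H' ≤ M / η) ∧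
      ∀ r ∉ ann H', ∑ r' ∈ Finset.univ.filter (fun r' => r' - r ∈ ann H'), |ft f r'| ≤ η := by
  open SpecProofAux in
  have key : ∀ d : ℕ, ∀ H' : Submodule (ZMod 2) (Fin n → ZMod 2),
      Module.finrank (ZMod 2) H' ≤ d →
      ∃ H'' : Submodule (ZMod 2) (Fin n → ZMod 2), H'' ≤ H' ∧
        ((Module.finrank (ZMod 2) H' : ℝ) - Module.finrank (ZMod 2) H'') * η
          + SpecProofAux.mass f H' ≤ SpecProofAux.mass f H'' ∧
        ∀ r ∉ ann H'', ∑ r' ∈ Finset.univ.filter (fun r' => r' - r ∈ ann H''), |ft f r'| ≤ η := by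
    intro d
    induction d with
    | zero =>
      intro H' hd
      refine ⟨H', le_rfl, by simp, ?_⟩
      intro r hr
      exfalso
      have hbot : H' = ⊥ := Submodule.finrank_eq_zero.mp (Nat.le_zero.mp hd)
      apply hr
      intro x hx
      rw [hbot] at hx
      simp only [Submodule.mem_bot] at hx
      subst hx
      simp
    | succ d ih =>
      intro H' hd
      by_cases hgood : ∀ r ∉ ann H',
          ∑ r' ∈ Finset.univ.filter (fun r' => r' - r ∈ ann H'), |ft f r'| ≤ η
      · exact ⟨H', le_rfl, by simp, hgood⟩
      · push_neg at hgood
        obtain ⟨r, hr, hrbig⟩ := hgood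
        set H₂ : Submodule (ZMod 2) (Fin n → ZMod 2) :=
          H' ⊓ LinearMap.ker (SpecProofAux.lmap r) with hH₂
        have hlt : H₂ < H' := by
          rw [lt_iff_le_and_ne]
          refine ⟨inf_le_left, ?_⟩
          intro heq
          apply hr
          intro x hx
          have hx2 : x ∈ H₂ := heq ▸ hx
          exact hx2.2
        have hrank : Module.finrank (ZMod 2) H₂ ≤ d := by
          have := Submodule.finrank_lt_finrank_of_lt hlt
          omega
        obtain ⟨H'', hle, hmass, hspec⟩ := ih H₂ hrank
        refine ⟨H'', hle.trans hlt.le, ?_, hspec⟩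
        have hstep := SpecProofAux.mass_step f H' hr
        have hfr := SpecProofAux.finrank_step H' r
        have h1 : ((Module.finrank (ZMod 2) H' : ℝ) - Module.finrank (ZMod 2) H'') ≤
            ((Module.finrank (ZMod 2) H₂ : ℝ) - Module.finrank (ZMod 2) H'') + 1 := by
          have : (Module.finrank (ZMod 2) H' : ℝ) ≤ (Module.finrank (ZMod 2) H₂ : ℝ) + 1 := by
            exact_mod_cast hfr
          linarith
        have h2 : ((Module.finrank (ZMod 2) H' : ℝ) - Module.finrank (ZMod 2) H'') * η ≤
            ((Module.finrank (ZMod 2) H₂ : ℝ) - Module.finrank (ZMod 2) H'') * η + η := by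
          nlinarith [hη.le]
        have h3 : SpecProofAux.mass f H' + η ≤ SpecProofAux.mass f H₂ := by
          have hB := hrbig.le
          linarith
        linarith
  obtain ⟨H'', hle, hmass, hspec⟩ := key (Module.finrank (ZMod 2) H) H le_rfl
  refine ⟨H'', hle, ?_, hspec⟩
  rw [le_div_iff₀ hη]
  have h1 := SpecProofAux.mass_nonneg f H
  have h2 := SpecProofAux.mass_le_aNorm f H''
  linarith
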